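/- arXiv:2002.00879 — 3 statements merged into one kernel-verified Lean document; each statement's English description precedes it below -/
import Mathlib

section
/- Let n ≥ 1 and let A be an n×n complex positive semidefinite Hermitian matrix. Then γ₊(A) equals the infimum, over all x ∈ ℂⁿ with x ≠ 0 and x* A x ≤ 1, of γ₊(A − A x x* A) + ‖A x‖₁². -/
open Matrix ComplexOrder

/-- The ℓ¹ norm of a vector in ℂⁿ. -/
noncomputable def l1n {n : ℕ} (x : Fin n → ℂ) : ℝ := ∑ i, ‖x i‖

/-- The entrywise ℓ¹ norm ‖A‖₁,₁ of a matrix. -/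
noncomputable def norm11 {n : ℕ} (A : Matrix (Fin n) (Fin n) ℂ) : ℝ :=
  ∑ i, ∑ j, ‖A i j‖

/-- The Frobenius norm of a matrix. -/
noncomputable def frobNorm {n : ℕ} (A : Matrix (Fin n) (Fin n) ℂ) : ℝ :=
  Real.sqrt (∑ i, ∑ j, ‖A i j‖ ^ 2)

/-- γ₊(A): infimum of Σ ‖g_k‖₁² over finite decompositions A = Σ g_k g_k*. -/
noncomputable def gammaPlus {n : ℕ} (A : Matrix (Fin n) (Fin n) ℂ) : ℝ :=
  sInf {r : ℝ | ∃ (m : ℕ) (g : Fin m → Fin n → ℂ),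
    A = ∑ k, vecMulVec (g k) (star (g k)) ∧ r = ∑ k, (l1n (g k)) ^ 2}

/-- γ(A): infimum of Σ ‖g_k‖₁‖h_k‖₁ over finite decompositions A = Σ g_k h_k*. -/
noncomputable def gammaCross {n : ℕ} (A : Matrix (Fin n) (Fin n) ℂ) : ℝ :=
  sInf {r : ℝ | ∃ (m : ℕ) (g h : Fin m → Fin n → ℂ),
    A = ∑ k, vecMulVec (g k) (star (h k)) ∧ r = ∑ k, l1n (g k) * l1n (h k)}

/-- γ₀(A): infimum of γ₊(B) + γ₊(C) over decompositions A = B - C with B, C PSD. -/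
noncomputable def gammaZero {n : ℕ} (A : Matrix (Fin n) (Fin n) ℂ) : ℝ :=
  sInf {r : ℝ | ∃ B C : Matrix (Fin n) (Fin n) ℂ, B.PosSemidef ∧ C.PosSemidef ∧
    A = B - C ∧ r = gammaPlus B + gammaPlus C}

section Aux

open scoped MatrixOrder Matrix.Norms.L2Operator in
lemma psd_eq_ctmul {n : ℕ} {A : Matrix (Fin n) (Fin n) ℂ} (hA : A.PosSemidef) :
    ∃ B : Matrix (Fin n) (Fin n) ℂ, A = Bᴴ * B := by
  obtain ⟨B, rfl⟩ := CStarAlgebra.nonneg_iff_eq_star_mul_self.mp hA.nonneg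
  exact ⟨B, rfl⟩

lemma l1n_nonneg {n : ℕ} (x : Fin n → ℂ) : 0 ≤ l1n x :=
  Finset.sum_nonneg fun _ _ => norm_nonneg _

lemma l1n_zero {n : ℕ} : l1n (0 : Fin n → ℂ) = 0 := by simp [l1n]

lemma psd_vecMulVec {n : ℕ} (v : Fin n → ℂ) : (vecMulVec v (star v)).PosSemidef := by
  have h : vecMulVec v (star v) = replicateCol (Fin 1) v * (replicateCol (Fin 1) v)ᴴ := by
    rw [conjTranspose_replicateCol, vecMulVec_eq (Fin 1)]
    rfl
  rw [h]
  exact posSemidef_self_mul_conjTranspose _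

lemma psd_sum {n m : ℕ} (g : Fin m → Fin n → ℂ) :
    (∑ k, vecMulVec (g k) (star (g k))).PosSemidef := by
  induction m with
  | zero => simpa using (Matrix.PosSemidef.zero (n := Fin n) (R := ℂ))
  | succ m ih =>
    rw [Fin.sum_univ_succ]
    exact (psd_vecMulVec (g 0)).add (ih fun k => g k.succ)

lemma gset_nonneg {n : ℕ} {A : Matrix (Fin n) (Fin n) ℂ} {r : ℝ}
    (h : r ∈ {r : ℝ | ∃ (m : ℕ) (g : Fin m → Fin n → ℂ),
      A = ∑ k, vecMulVec (g k) (star (g k)) ∧ r = ∑ k, (l1n (g k)) ^ 2}) : 0 ≤ r := by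
  obtain ⟨m, g, -, rfl⟩ := h
  exact Finset.sum_nonneg fun k _ => sq_nonneg _

lemma gset_bddBelow {n : ℕ} (A : Matrix (Fin n) (Fin n) ℂ) :
    BddBelow {r : ℝ | ∃ (m : ℕ) (g : Fin m → Fin n → ℂ),
      A = ∑ k, vecMulVec (g k) (star (g k)) ∧ r = ∑ k, (l1n (g k)) ^ 2} :=
  ⟨0, fun _ h => gset_nonneg h⟩

lemma gammaPlus_nonneg {n : ℕ} (A : Matrix (Fin n) (Fin n) ℂ) : 0 ≤ gammaPlus A :=
  Real.sInf_nonneg fun _ h => gset_nonneg h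

lemma gammaPlus_le {n m : ℕ} {A : Matrix (Fin n) (Fin n) ℂ} {g : Fin m → Fin n → ℂ}
    (h : A = ∑ k, vecMulVec (g k) (star (g k))) :
    gammaPlus A ≤ ∑ k, (l1n (g k)) ^ 2 :=
  csInf_le (gset_bddBelow A) ⟨m, g, h, rfl⟩

lemma gammaPlus_zero {n : ℕ} : gammaPlus (0 : Matrix (Fin n) (Fin n) ℂ) = 0 := by
  refine le_antisymm ?_ (gammaPlus_nonneg 0)
  simpa using gammaPlus_le (m := 0) (g := fun k _ => 0) (by simp)

lemma psd_decomp {n : ℕ} {A : Matrix (Fin n) (Fin n) ℂ} (hA : A.PosSemidef) :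
    ∃ (g : Fin n → Fin n → ℂ), A = ∑ k, vecMulVec (g k) (star (g k)) := by
  obtain ⟨B, hB⟩ := psd_eq_ctmul hA
  refine ⟨fun k => star (B k), ?_⟩
  rw [hB]
  ext i j
  simp [Matrix.mul_apply, vecMulVec_apply, Matrix.sum_apply, conjTranspose_apply, mul_comm]

lemma exists_mulVec_eq {n : ℕ} {A : Matrix (Fin n) (Fin n) ℂ} (hA : A.IsHermitian)
    (b : Fin n → ℂ) (hb : ∀ v : Fin n → ℂ, A *ᵥ v = 0 → star v ⬝ᵥ b = 0) :
    ∃ x : Fin n → ℂ, A *ᵥ x = b := by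
  classical
  set T := Matrix.toEuclideanLin A with hT
  have hadj : LinearMap.adjoint T = T := by
    rw [hT, ← Matrix.toEuclideanLin_conjTranspose_eq_adjoint, hA.eq]
  set K := LinearMap.ker T with hK
  have hle : LinearMap.range T ≤ Kᗮ := by
    rintro y ⟨x, rfl⟩
    intro u hu
    have h0 : T u = 0 := hu
    calc inner ℂ u (T x) = inner ℂ (LinearMap.adjoint T u) x := by
          rw [LinearMap.adjoint_inner_left]
      _ = (0 : ℂ) := by rw [hadj, h0]; simp
  have hrank : Module.finrank ℂ (LinearMap.range T) = Module.finrank ℂ Kᗮ := by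
    have h1 := LinearMap.finrank_range_add_finrank_ker T
    rw [← hK] at h1
    have h2 := Submodule.finrank_add_finrank_orthogonal (K := K)
    omega
  have heq : LinearMap.range T = Kᗮ := Submodule.eq_of_le_of_finrank_le hle (le_of_eq hrank.symm)
  set b' : EuclideanSpace ℂ (Fin n) := (WithLp.equiv 2 (Fin n → ℂ)).symm b with hb'
  have hbK : b' ∈ Kᗮ := by
    intro u hu
    have hu0 : A *ᵥ (WithLp.equiv 2 (Fin n → ℂ)) u = 0 := by
      have h0 : T u = 0 := hu
      rw [hT, Matrix.toEuclideanLin_apply] at h0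
      have := congrArg (WithLp.equiv 2 (Fin n → ℂ)) h0
      simpa using this
    have := hb _ hu0
    simpa [hb', PiLp.inner_apply, dotProduct, RCLike.inner_apply, mul_comm] using this
  rw [← heq] at hbK
  obtain ⟨x, hx⟩ := hbK
  refine ⟨(WithLp.equiv 2 (Fin n → ℂ)) x, ?_⟩
  have := congrArg (WithLp.equiv 2 (Fin n → ℂ)) hx
  rw [hT, Matrix.toEuclideanLin_apply] at this
  simpa [hb'] using this

lemma dot_vecMulVec {n : ℕ} (u y : Fin n → ℂ) :
    star y ⬝ᵥ (vecMulVec u (star u)) *ᵥ y = (star y ⬝ᵥ u) * (star u ⬝ᵥ y) := by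
  simp [vecMulVec_apply, mulVec, dotProduct, Finset.mul_sum, Finset.sum_mul]
  rw [Finset.sum_comm]
  congr 1; ext i; congr 1; ext j; ring

lemma star_dot_comm {n : ℕ} (u y : Fin n → ℂ) :
    star y ⬝ᵥ u = (starRingEnd ℂ) (star u ⬝ᵥ y) := by
  simp [dotProduct, map_sum, mul_comm]

lemma dot_self_norm {n : ℕ} (y : Fin n → ℂ) :
    star y ⬝ᵥ y = ((‖(WithLp.equiv 2 (Fin n → ℂ)).symm y‖ ^ 2 : ℝ) : ℂ) := by
  have h := inner_self_eq_norm_sq_to_K (𝕜 := ℂ) ((WithLp.equiv 2 (Fin n → ℂ)).symm y)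
  rw [show star y ⬝ᵥ y = (inner ℂ ((WithLp.equiv 2 (Fin n → ℂ)).symm y)
      ((WithLp.equiv 2 (Fin n → ℂ)).symm y) : ℂ) by
    rw [PiLp.inner_apply]; simp [RCLike.inner_apply, dotProduct, mul_comm, Complex.mul_conj'], h]
  norm_cast

lemma one_sub_outer_psd {n : ℕ} (u : Fin n → ℂ) (hu : star u ⬝ᵥ u ≤ 1) :
    ((1 : Matrix (Fin n) (Fin n) ℂ) - vecMulVec u (star u)).PosSemidef := by
  refine PosSemidef.of_dotProduct_mulVec_nonneg ?_ ?_
  · refine IsHermitian.sub isHermitian_one ?_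
    ext i j
    simp [conjTranspose_apply, vecMulVec_apply, mul_comm]
  · intro y
    rw [sub_mulVec, dotProduct_sub, one_mulVec, dot_vecMulVec, star_dot_comm u y]
    set u' : EuclideanSpace ℂ (Fin n) := (WithLp.equiv 2 (Fin n → ℂ)).symm u with hu'
    set y' : EuclideanSpace ℂ (Fin n) := (WithLp.equiv 2 (Fin n → ℂ)).symm y with hy'
    have ha : star u ⬝ᵥ y = inner ℂ u' y' := by
      simp [hu', hy', PiLp.inner_apply, RCLike.inner_apply, dotProduct, mul_comm]
    have hun : ‖u'‖ ^ 2 ≤ 1 := by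
      have h := dot_self_norm u
      rw [h] at hu
      exact_mod_cast hu
    have hcs : ‖(inner ℂ u' y' : ℂ)‖ ≤ ‖u'‖ * ‖y'‖ := norm_inner_le_norm u' y'
    rw [ha, dot_self_norm y, ← hy']
    have hconj : (starRingEnd ℂ) (inner ℂ u' y' : ℂ) * (inner ℂ u' y') =
        ((‖(inner ℂ u' y' : ℂ)‖ ^ 2 : ℝ) : ℂ) := by
      rw [Complex.conj_mul']
      norm_cast
    rw [hconj, ← Complex.ofReal_sub, Complex.zero_le_real]
    nlinarith [norm_nonneg u', norm_nonneg y', norm_nonneg (inner ℂ u' y' : ℂ),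
      sq_nonneg (‖u'‖*‖y'‖), sq_nonneg ‖y'‖]

lemma vecMulVec_conj {n : ℕ} (B : Matrix (Fin n) (Fin n) ℂ) (u : Fin n → ℂ) :
    vecMulVec (Bᴴ *ᵥ u) (star (Bᴴ *ᵥ u)) = Bᴴ * vecMulVec u (star u) * B := by
  rw [vecMulVec_eq (Fin 1), vecMulVec_eq (Fin 1), replicateCol_mulVec, star_mulVec,
    conjTranspose_conjTranspose, replicateRow_vecMul]
  simp only [Matrix.mul_assoc]

lemma sub_outer_psd {n : ℕ} {A : Matrix (Fin n) (Fin n) ℂ} (hA : A.PosSemidef)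
    (x : Fin n → ℂ) (hx : star x ⬝ᵥ A *ᵥ x ≤ 1) :
    (A - vecMulVec (A *ᵥ x) (star (A *ᵥ x))).PosSemidef := by
  obtain ⟨B, rfl⟩ := psd_eq_ctmul hA
  set u := B *ᵥ x with hu
  have hAx : (Bᴴ * B) *ᵥ x = Bᴴ *ᵥ u := by rw [← mulVec_mulVec]
  have hdot : star x ⬝ᵥ (Bᴴ * B) *ᵥ x = star u ⬝ᵥ u := by
    rw [hAx, dotProduct_mulVec, vecMul_conjTranspose, star_star, hu]
  rw [hAx, vecMulVec_conj]
  have h1 : Bᴴ * B - Bᴴ * vecMulVec u (star u) * B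
      = Bᴴ * ((1 : Matrix (Fin n) (Fin n) ℂ) - vecMulVec u (star u)) * B := by
    noncomm_ring
  rw [h1]
  exact (one_sub_outer_psd u (by rw [← hdot]; exact hx)).conjTranspose_mul_mul_same B

end Aux

theorem stmt10 (n : ℕ) (hn : 1 ≤ n) (A : Matrix (Fin n) (Fin n) ℂ) (hA : A.PosSemidef) :
    gammaPlus A = sInf {r : ℝ | ∃ x : Fin n → ℂ, x ≠ 0 ∧ star x ⬝ᵥ A.mulVec x ≤ 1 ∧
      r = gammaPlus (A - vecMulVec (A.mulVec x) (star (A.mulVec x)))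
        + (l1n (A.mulVec x)) ^ 2} := by
  classical
  set S := {r : ℝ | ∃ x : Fin n → ℂ, x ≠ 0 ∧ star x ⬝ᵥ A.mulVec x ≤ 1 ∧
      r = gammaPlus (A - vecMulVec (A.mulVec x) (star (A.mulVec x)))
        + (l1n (A.mulVec x)) ^ 2} with hS
  have hSbdd : BddBelow S := by
    refine ⟨0, fun r hr => ?_⟩
    obtain ⟨x, -, -, rfl⟩ := hr
    exact add_nonneg (gammaPlus_nonneg _) (sq_nonneg _)
  -- a nonzero admissible vector exists
  have hSne : S.Nonempty := by
    set i0 : Fin n := ⟨0, hn⟩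
    set e : Fin n → ℂ := Pi.single i0 1 with he
    set c : ℂ := star e ⬝ᵥ A *ᵥ e with hc
    have hc0 : 0 ≤ c := hA.dotProduct_mulVec_nonneg e
    have hcim : c.im = 0 := by
      have := (Complex.le_def.mp hc0).2
      simpa using this.symm
    have hcre : 0 ≤ c.re := by simpa using (Complex.le_def.mp hc0).1
    set t : ℝ := 1 / (1 + c.re) with ht
    have ht0 : 0 < t := by positivity
    set x : Fin n → ℂ := (t : ℂ) • e with hx
    have hene : e ≠ 0 := by
      intro h
      have h1 := congrFun h i0
      rw [he, Pi.single_eq_same] at h1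
      exact one_ne_zero h1
    have hxne : x ≠ 0 := smul_ne_zero (Complex.ofReal_ne_zero.mpr ht0.ne') hene
    refine ⟨_, ⟨x, hxne, ?_, rfl⟩⟩
    have hval : star x ⬝ᵥ A *ᵥ x = ((t ^ 2 : ℝ) : ℂ) * c := by
      rw [hx, mulVec_smul, dotProduct_smul, star_smul, smul_dotProduct, hc]
      push_cast
      simp [smul_eq_mul]
      ring
    rw [hval, Complex.le_def]
    have hre2 : (((t ^ 2 : ℝ) : ℂ) * c).re = t ^ 2 * c.re := by
      rw [Complex.re_ofReal_mul]
    have him2 : (((t ^ 2 : ℝ) : ℂ) * c).im = 0 := by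
      rw [Complex.im_ofReal_mul, hcim, mul_zero]
    constructor
    · rw [hre2, Complex.one_re, ht]
      rw [div_pow, one_pow, div_mul_eq_mul_div, one_mul]
      rw [div_le_one (by positivity)]
      nlinarith [hcre]
    · rw [him2, Complex.one_im]
  refine le_antisymm ?_ ?_
  · -- gammaPlus A ≤ every element of S
    refine le_csInf hSne ?_
    rintro r ⟨x, hx0, hx1, rfl⟩
    set D := A - vecMulVec (A *ᵥ x) (star (A *ᵥ x)) with hD
    have hDpsd : D.PosSemidef := sub_outer_psd hA x hx1
    obtain ⟨h, hh⟩ := psd_decomp hDpsd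
    set c : ℝ := (l1n (A *ᵥ x)) ^ 2 with hcdef
    have key : gammaPlus A - c ≤ gammaPlus D := by
      refine le_csInf ⟨_, n, h, hh, rfl⟩ ?_
      rintro s ⟨m, g, hdec, rfl⟩
      rw [sub_le_iff_le_add]
      set G : Fin (m+1) → Fin n → ℂ := Fin.cons (A *ᵥ x) g with hG
      have hAdec : A = ∑ k : Fin (m+1), vecMulVec (G k) (star (G k)) := by
        rw [Fin.sum_univ_succ]
        simp only [hG, Fin.cons_zero, Fin.cons_succ]
        rw [← hdec, hD]
        abel
      calc gammaPlus A ≤ ∑ k : Fin (m+1), (l1n (G k)) ^ 2 :=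
            gammaPlus_le hAdec
        _ = (∑ k : Fin m, (l1n (g k)) ^ 2) + c := by
            rw [Fin.sum_univ_succ]
            simp only [hG, Fin.cons_zero, Fin.cons_succ, hcdef]
            ring
    linarith
  · -- sInf S ≤ every decomposition value of A
    refine le_csInf ?_ ?_
    · obtain ⟨g, hg⟩ := psd_decomp hA
      exact ⟨_, n, g, hg, rfl⟩
    rintro t ⟨m, g, hdec, rfl⟩
    by_cases hzero : ∀ k, g k = 0
    · -- A = 0
      have hA0 : A = 0 := by
        rw [hdec]
        apply Finset.sum_eq_zero
        intro k _
        rw [hzero k]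
        ext i j
        simp [vecMulVec_apply]
      set e : Fin n → ℂ := Pi.single (⟨0, hn⟩ : Fin n) 1 with he
      have hene : e ≠ 0 := by
        intro h
        have := congrFun h ⟨0, hn⟩
        simp [he, Pi.single_eq_same] at this
      have h0S : (0:ℝ) ∈ S := by
        refine ⟨e, hene, ?_, ?_⟩
        · rw [hA0]; simp
        · rw [hA0]
          have h9 : (0 : Matrix (Fin n) (Fin n) ℂ) *ᵥ e = 0 := by simp
          rw [h9]
          have h10 : (0 : Matrix (Fin n) (Fin n) ℂ)
              - vecMulVec (0 : Fin n → ℂ) (star (0 : Fin n → ℂ)) = 0 := by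
            ext i j; simp [vecMulVec_apply]
          rw [h10, gammaPlus_zero, l1n_zero]
          ring
      refine csInf_le_of_le hSbdd h0S ?_
      exact Finset.sum_nonneg fun k _ => sq_nonneg _
    · push_neg at hzero
      obtain ⟨k₀, hk₀⟩ := hzero
      set g' : Fin m → Fin n → ℂ := fun k => if k = k₀ then 0 else g k with hg'
      set M := vecMulVec (g k₀) (star (g k₀)) with hM
      have houter : ∀ k, vecMulVec (g' k) (star (g' k))
          = vecMulVec (g k) (star (g k)) - (if k = k₀ then M else 0) := by
        intro k
        by_cases h : k = k₀
        · subst h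
          simp only [hg', if_pos rfl, hM]
          ext i j
          simp [vecMulVec_apply]
        · simp only [hg', if_neg h]
          simp
      have hMsum : A - M = ∑ k, vecMulVec (g' k) (star (g' k)) := by
        rw [funext fun k => houter k] at *
        rw [Finset.sum_sub_distrib, ← hdec, Finset.sum_ite_eq' Finset.univ k₀ (fun _ => M)]
        simp
      have hMpsd : (A - M).PosSemidef := by
        rw [hMsum]; exact psd_sum g'
      -- solve A x = g k₀
      have hker : ∀ v : Fin n → ℂ, A *ᵥ v = 0 → star v ⬝ᵥ g k₀ = 0 := by
        intro v hv
        have hAv : star v ⬝ᵥ A *ᵥ v = 0 := by rw [hv]; simp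
        have h1 : 0 ≤ star v ⬝ᵥ M *ᵥ v := (hM ▸ psd_vecMulVec (g k₀)).dotProduct_mulVec_nonneg v
        have h2 : 0 ≤ star v ⬝ᵥ (A - M) *ᵥ v := hMpsd.dotProduct_mulVec_nonneg v
        rw [sub_mulVec, dotProduct_sub, hAv, zero_sub] at h2
        have h3 : star v ⬝ᵥ M *ᵥ v = 0 := le_antisymm (neg_nonneg.mp h2) h1
        have h4 : M *ᵥ v = 0 := ((psd_vecMulVec (g k₀)).dotProduct_mulVec_zero_iff v).mp (hM ▸ h3)
        obtain ⟨i, hi⟩ := Function.ne_iff.mp hk₀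
        have h5 := congrFun h4 i
        simp only [hM, Pi.zero_apply] at h5
        have h6 : g k₀ i * (star (g k₀) ⬝ᵥ v) = 0 := by
          rw [← h5]
          simp [vecMulVec_apply, mulVec, dotProduct, Finset.mul_sum, mul_assoc]
        have h7 : star (g k₀) ⬝ᵥ v = 0 := by
          rcases mul_eq_zero.mp h6 with h | h
          · exact absurd h (by simpa using hi)
          · exact h
        rw [star_dot_comm (g k₀) v, h7]
        simp
      obtain ⟨x, hx⟩ := exists_mulVec_eq hA.1 (g k₀) hker
      have hxne : x ≠ 0 := by
        intro h
        rw [h] at hx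
        simp at hx
        exact hk₀ hx.symm
      -- x* A x ≤ 1
      set c : ℂ := star x ⬝ᵥ A *ᵥ x with hc
      have hc0 : 0 ≤ c := hA.dotProduct_mulVec_nonneg x
      have hcim : c.im = 0 := by
        have := (Complex.le_def.mp hc0).2
        simpa using this.symm
      have hcre : 0 ≤ c.re := by simpa using (Complex.le_def.mp hc0).1
      have hcval : c = star x ⬝ᵥ g k₀ := by rw [hc, hx]
      have hMx : star x ⬝ᵥ M *ᵥ x = c * (starRingEnd ℂ) c := by
        rw [hM, dot_vecMulVec, star_dot_comm x (g k₀), ← hcval]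
      have hcle : c ≤ 1 := by
        have h2 : 0 ≤ star x ⬝ᵥ (A - M) *ᵥ x := hMpsd.dotProduct_mulVec_nonneg x
        rw [sub_mulVec, dotProduct_sub, ← hc, hMx] at h2
        have hre : c.re * c.re ≤ c.re := by
          have h11 := (Complex.le_def.mp h2).1
          simp only [Complex.sub_re, Complex.mul_re, Complex.conj_re, Complex.conj_im,
            Complex.zero_re] at h11
          nlinarith [h11, sq_nonneg c.im]
        have h1le : c.re ≤ 1 := by nlinarith [hre, hcre]
        rw [Complex.le_def]
        exact ⟨by simpa using h1le, by simpa using hcim⟩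
      -- the value
      have hgval : gammaPlus (A - M) ≤ (∑ k, (l1n (g k))^2) - (l1n (g k₀))^2 := by
        have := gammaPlus_le hMsum
        have hsum : ∑ k, (l1n (g' k))^2 = (∑ k, (l1n (g k))^2) - (l1n (g k₀))^2 := by
          have h8 : ∀ k, (l1n (g' k))^2
              = (l1n (g k))^2 - (if k = k₀ then (l1n (g k₀))^2 else 0) := by
            intro k
            by_cases h : k = k₀
            · subst h; simp [hg', l1n_zero]
            · simp [hg', h]
          rw [Finset.sum_congr rfl fun k _ => h8 k, Finset.sum_sub_distrib,
            Finset.sum_ite_eq' Finset.univ k₀ (fun _ => (l1n (g k₀))^2)]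
          simp
        rw [← hsum]
        exact this
      have hmem : gammaPlus (A - vecMulVec (A *ᵥ x) (star (A *ᵥ x))) + (l1n (A *ᵥ x))^2 ∈ S :=
        ⟨x, hxne, by rw [← hc]; exact hcle, rfl⟩
      refine csInf_le_of_le hSbdd hmem ?_
      rw [hx, ← hM]
      have := l1n_nonneg (g k₀)
      linarith [hgval]
end

section
/- Let n ≥ 1 and δ > 0, and let C_δ be the set of n×n complex Hermitian matrices T such that T − δ·I is positive semidefinite and trace(T) ≤ 1. Then γ₊ is Lipschitz continuous on C_δ with respect to the Frobenius norm, with Lipschitz constant n/δ + n^{3/2}: for all T₁, T₂ ∈ C_δ, |γ₊(T₁) − γ₊(T₂)| ≤ (n/δ + n^{3/2})·‖T₁ − T₂‖_Fr. -/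
open Matrix ComplexOrder

set_option maxRecDepth 8000

def gpSet {n : ℕ} (A : Matrix (Fin n) (Fin n) ℂ) : Set ℝ :=
  {r : ℝ | ∃ (m : ℕ) (g : Fin m → Fin n → ℂ),
    A = ∑ k, vecMulVec (g k) (star (g k)) ∧ r = ∑ k, (l1n (g k)) ^ 2}

lemma gammaPlus_eq {n : ℕ} (A : Matrix (Fin n) (Fin n) ℂ) : gammaPlus A = sInf (gpSet A) := rfl

lemma gpSet_nonneg {n : ℕ} {A : Matrix (Fin n) (Fin n) ℂ} {r : ℝ} (hr : r ∈ gpSet A) : 0 ≤ r := by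
  obtain ⟨m, g, -, rfl⟩ := hr
  positivity

lemma gpSet_bddBelow {n : ℕ} (A : Matrix (Fin n) (Fin n) ℂ) : BddBelow (gpSet A) :=
  ⟨0, fun _ hr => gpSet_nonneg hr⟩

lemma gammaPlus_le_s14 {n : ℕ} {A : Matrix (Fin n) (Fin n) ℂ} {r : ℝ} (hr : r ∈ gpSet A) :
    gammaPlus A ≤ r :=
  csInf_le (gpSet_bddBelow A) hr

open scoped MatrixOrder in
lemma exists_mem_gpSet {n : ℕ} {A : Matrix (Fin n) (Fin n) ℂ} (hA : A.PosSemidef) :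
    ∃ r ∈ gpSet A, r ≤ n * A.trace.re := by
  set B := CFC.sqrt A with hBdef
  have hB : B * B = A := CFC.sqrt_mul_sqrt_self A hA.nonneg
  have hBH : B.IsHermitian := (CFC.sqrt_nonneg A).posSemidef.1
  refine ⟨∑ k, (l1n (fun i => B i k)) ^ 2, ⟨n, fun k i => B i k, ?_, rfl⟩, ?_⟩
  · ext i j
    rw [← hB]
    simp only [Matrix.sum_apply, vecMulVec_apply, Matrix.mul_apply, Pi.star_apply]
    congr 1
    ext k
    rw [hBH.apply k j]
  · have htr : A.trace.re = ∑ k, ∑ i, ‖B i k‖ ^ 2 := by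
      rw [← hB]
      rw [Matrix.trace]
      simp only [Matrix.diag_apply, Matrix.mul_apply]
      rw [Finset.sum_comm]
      rw [Complex.re_sum]
      congr 1; ext k
      rw [Complex.re_sum]
      congr 1; ext i
      rw [← hBH.apply i k, Complex.star_def, mul_comm, Complex.mul_conj,
        ← Complex.sq_norm]
      rw [Complex.ofReal_re, Complex.norm_conj]
    rw [htr, Finset.mul_sum]
    refine Finset.sum_le_sum fun k _ => ?_
    have := sq_sum_le_card_mul_sum_sq (s := Finset.univ)
      (f := fun i => ‖B i k‖)
    simpa [l1n] using this

lemma gammaPlus_le_trace {n : ℕ} {A : Matrix (Fin n) (Fin n) ℂ} (hA : A.PosSemidef) :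
    gammaPlus A ≤ n * A.trace.re := by
  obtain ⟨r, hr, hle⟩ := exists_mem_gpSet hA
  exact (gammaPlus_le_s14 hr).trans hle

lemma add_mem_gpSet {n : ℕ} {A B : Matrix (Fin n) (Fin n) ℂ} {a b : ℝ}
    (ha : a ∈ gpSet A) (hb : b ∈ gpSet B) : a + b ∈ gpSet (A + B) := by
  obtain ⟨m₁, g, hg, rfl⟩ := ha
  obtain ⟨m₂, h, hh, rfl⟩ := hb
  refine ⟨m₁ + m₂, Fin.append g h, ?_, ?_⟩
  · rw [Fin.sum_univ_add]
    simp only [Fin.append_left, Fin.append_right, ← hg, ← hh]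
  · rw [Fin.sum_univ_add]
    simp only [Fin.append_left, Fin.append_right]

lemma gammaPlus_add_le {n : ℕ} {A B : Matrix (Fin n) (Fin n) ℂ}
    (hA : A.PosSemidef) (hB : B.PosSemidef) :
    gammaPlus (A + B) ≤ gammaPlus A + gammaPlus B := by
  obtain ⟨a₀, ha₀, -⟩ := exists_mem_gpSet hA
  obtain ⟨b₀, hb₀, -⟩ := exists_mem_gpSet hB
  have key : ∀ a ∈ gpSet A, ∀ b ∈ gpSet B, gammaPlus (A + B) ≤ a + b :=
    fun a ha b hb => gammaPlus_le_s14 (add_mem_gpSet ha hb)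
  have h1 : gammaPlus (A + B) - gammaPlus B ≤ gammaPlus A := by
    rw [gammaPlus_eq A]
    refine le_csInf ⟨a₀, ha₀⟩ fun a ha => ?_
    have h2 : gammaPlus (A + B) - a ≤ gammaPlus B := by
      rw [gammaPlus_eq B]
      refine le_csInf ⟨b₀, hb₀⟩ fun b hb => ?_
      linarith [key a ha b hb]
    linarith
  linarith

lemma smul_mem_gpSet {n : ℕ} {c : ℝ} (hc : 0 ≤ c) {A : Matrix (Fin n) (Fin n) ℂ} {a : ℝ}
    (ha : a ∈ gpSet A) : c * a ∈ gpSet (c • A) := by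
  obtain ⟨m, g, hg, rfl⟩ := ha
  have hsq : (Real.sqrt c : ℂ) * (Real.sqrt c : ℂ) = (c : ℂ) := by
    rw [← Complex.ofReal_mul, Real.mul_self_sqrt hc]
  refine ⟨m, fun k => ((Real.sqrt c : ℝ) : ℂ) • g k, ?_, ?_⟩
  · rw [hg, Finset.smul_sum]
    refine Finset.sum_congr rfl fun k _ => ?_
    ext i j
    simp only [vecMulVec_apply, Pi.star_apply, Pi.smul_apply, smul_eq_mul,
      Matrix.smul_apply]
    rw [star_mul', Complex.real_smul, ← hsq]
    simp only [Complex.star_def, Complex.conj_ofReal]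
    ring
  · rw [Finset.mul_sum]
    refine Finset.sum_congr rfl fun k _ => ?_
    have hl : l1n (((Real.sqrt c : ℝ) : ℂ) • g k) = Real.sqrt c * l1n (g k) := by
      simp only [l1n, Pi.smul_apply, smul_eq_mul]
      rw [Finset.mul_sum]
      refine Finset.sum_congr rfl fun i _ => ?_
      rw [norm_mul, Complex.norm_real, Real.norm_of_nonneg (Real.sqrt_nonneg c)]
    rw [hl, mul_pow, Real.sq_sqrt hc]

lemma gammaPlus_smul_le {n : ℕ} {c : ℝ} (hc : 0 ≤ c) {A : Matrix (Fin n) (Fin n) ℂ}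
    (hA : A.PosSemidef) : gammaPlus (c • A) ≤ c * gammaPlus A := by
  obtain ⟨a₀, ha₀, -⟩ := exists_mem_gpSet hA
  rcases hc.eq_or_lt with rfl | hc'
  · rw [zero_smul, zero_mul]
    exact gammaPlus_le_s14 (A := 0) ⟨0, fun k => 0, by simp, by simp⟩
  · rw [← div_le_iff₀' hc', gammaPlus_eq A]
    refine le_csInf ⟨a₀, ha₀⟩ fun a ha => ?_
    rw [div_le_iff₀' hc']
    exact gammaPlus_le_s14 (smul_mem_gpSet hc ha)

lemma posSemidef_real_smul {n : ℕ} {c : ℝ} (hc : 0 ≤ c) {A : Matrix (Fin n) (Fin n) ℂ}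
    (hA : A.PosSemidef) : (c • A).PosSemidef := by
  have h : c • A = (c : ℂ) • A := by
    ext i j
    simp [Complex.real_smul]
  rw [h]
  refine Matrix.PosSemidef.of_dotProduct_mulVec_nonneg ?_ ?_
  · show ((c : ℂ) • A)ᴴ = (c : ℂ) • A
    rw [conjTranspose_smul, Complex.star_def, Complex.conj_ofReal, hA.1.eq]
  · intro x
    rw [smul_mulVec, dotProduct_smul, smul_eq_mul]
    exact mul_nonneg (by exact_mod_cast Complex.zero_le_real.mpr hc) (hA.dotProduct_mulVec_nonneg x)

lemma quad_abs_le {n : ℕ} (E : Matrix (Fin n) (Fin n) ℂ) (x : Fin n → ℂ) :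
    ‖star x ⬝ᵥ (E *ᵥ x)‖ ≤ frobNorm E * ∑ i, ‖x i‖ ^ 2 := by
  set N := ∑ i, ‖x i‖ ^ 2 with hN
  set F := frobNorm E with hF
  have hNnn : 0 ≤ N := Finset.sum_nonneg fun i _ => by positivity
  have hFnn : 0 ≤ F := Real.sqrt_nonneg _
  set S := ∑ i, ∑ j, ‖x i‖ * ‖x j‖ * ‖E i j‖ with hS
  have hSnn : 0 ≤ S := Finset.sum_nonneg fun i _ => Finset.sum_nonneg fun j _ => by positivity
  have h1 : ‖star x ⬝ᵥ (E *ᵥ x)‖ ≤ S := by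
    rw [dotProduct, hS]
    refine (norm_sum_le _ _).trans (Finset.sum_le_sum fun i _ => ?_)
    rw [Pi.star_apply, norm_mul, Complex.star_def, Complex.norm_conj]
    have hv : ‖(E *ᵥ x) i‖ ≤ ∑ j, ‖E i j‖ * ‖x j‖ := by
      rw [Matrix.mulVec, dotProduct]
      refine (norm_sum_le _ _).trans (Finset.sum_le_sum fun j _ => ?_)
      rw [norm_mul]
    calc ‖x i‖ * ‖(E *ᵥ x) i‖
        ≤ ‖x i‖ * ∑ j, ‖E i j‖ * ‖x j‖ :=
          mul_le_mul_of_nonneg_left hv (by positivity)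
      _ = ∑ j, ‖x i‖ * ‖x j‖ * ‖E i j‖ := by
          rw [Finset.mul_sum]
          exact Finset.sum_congr rfl fun j _ => by ring
  have h2 : S ≤ F * N := by
    have cs := Finset.sum_mul_sq_le_sq_mul_sq (Finset.univ : Finset (Fin n × Fin n))
      (fun p => ‖x p.1‖ * ‖x p.2‖)
      (fun p => ‖E p.1 p.2‖)
    have e1 : ∑ p : Fin n × Fin n,
        (‖x p.1‖ * ‖x p.2‖) * ‖E p.1 p.2‖ = S := by
      rw [Fintype.sum_prod_type]
    have e2 : ∑ p : Fin n × Fin n, (‖x p.1‖ * ‖x p.2‖) ^ 2 = N ^ 2 := by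
      rw [Fintype.sum_prod_type, pow_two, Finset.sum_mul_sum]
      exact Finset.sum_congr rfl fun i _ => Finset.sum_congr rfl fun j _ => by ring
    have e3 : ∑ p : Fin n × Fin n, ‖E p.1 p.2‖ ^ 2 = F ^ 2 := by
      rw [Fintype.sum_prod_type, hF, frobNorm,
        Real.sq_sqrt (Finset.sum_nonneg fun i _ => Finset.sum_nonneg fun j _ => by positivity)]
    rw [e1, e2, e3] at cs
    have h4 : S ^ 2 ≤ (F * N) ^ 2 := by rw [mul_pow]; linarith
    have := Real.sqrt_le_sqrt h4
    rwa [Real.sqrt_sq hSnn, Real.sqrt_sq (mul_nonneg hFnn hNnn)] at this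
  exact h1.trans h2

lemma posSemidef_frob_one_add {n : ℕ} {E : Matrix (Fin n) (Fin n) ℂ} (hE : E.IsHermitian) :
    (frobNorm E • (1 : Matrix (Fin n) (Fin n) ℂ) + E).PosSemidef := by
  have hFnn : 0 ≤ frobNorm E := Real.sqrt_nonneg _
  refine Matrix.PosSemidef.of_dotProduct_mulVec_nonneg (((posSemidef_real_smul hFnn Matrix.PosSemidef.one).1).add hE) fun x => ?_
  set z := star x ⬝ᵥ (E *ᵥ x) with hz
  have hherm : star z = z := by
    rw [hz]
    conv_lhs => rw [star_dotProduct, star_star, star_mulVec, hE.eq, ← dotProduct_mulVec]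
  have him : z.im = 0 := by
    rw [Complex.star_def] at hherm
    exact ((Complex.conj_eq_iff_im).mp hherm)
  set N := ∑ i, ‖x i‖ ^ 2 with hN
  have hNnn : 0 ≤ N := Finset.sum_nonneg fun i _ => by positivity
  have hxx : star x ⬝ᵥ x = ((N : ℝ) : ℂ) := by
    rw [dotProduct, hN]
    push_cast
    refine Finset.sum_congr rfl fun i _ => ?_
    rw [Pi.star_apply, Complex.star_def, mul_comm, Complex.mul_conj, Complex.normSq_eq_norm_sq]
    push_cast
    ring
  have hsplit : star x ⬝ᵥ ((frobNorm E • (1 : Matrix (Fin n) (Fin n) ℂ) + E) *ᵥ x)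
      = ((frobNorm E * N : ℝ) : ℂ) + z := by
    rw [add_mulVec, dotProduct_add, hz]
    congr 1
    have h1 : (frobNorm E • (1 : Matrix (Fin n) (Fin n) ℂ)) *ᵥ x = frobNorm E • x := by
      rw [Matrix.smul_mulVec, Matrix.one_mulVec]
    rw [h1]
    have h2 : star x ⬝ᵥ (frobNorm E • x) = (frobNorm E : ℂ) * (star x ⬝ᵥ x) := by
      rw [dotProduct_smul, Complex.real_smul]
    rw [h2, hxx]
    push_cast
    ring
  rw [hsplit]
  rw [RCLike.nonneg_iff (K := ℂ)]
  constructor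
  · have habs : ‖z‖ ≤ frobNorm E * N := quad_abs_le E x
    have h5 := abs_le.mp ((Complex.abs_re_le_norm z).trans habs)
    simp only [RCLike.re_to_complex, Complex.add_re, Complex.ofReal_re]
    linarith [h5.1]
  · simp only [RCLike.im_to_complex, Complex.add_im, Complex.ofReal_im, him]
    ring

lemma trace_re_le_sqrt {n : ℕ} (E : Matrix (Fin n) (Fin n) ℂ) :
    E.trace.re ≤ Real.sqrt n * frobNorm E := by
  set F := frobNorm E with hF
  have hFnn : 0 ≤ F := Real.sqrt_nonneg _
  set a := ∑ i, ‖E i i‖ with ha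
  have hann : 0 ≤ a := Finset.sum_nonneg fun i _ => by positivity
  have h0 : E.trace.re ≤ a := by
    rw [Matrix.trace, Complex.re_sum, ha]
    exact Finset.sum_le_sum fun i _ => Complex.re_le_norm _
  have h1 : a ^ 2 ≤ n * ∑ i, ‖E i i‖ ^ 2 := by
    have := sq_sum_le_card_mul_sum_sq (s := (Finset.univ : Finset (Fin n)))
      (f := fun i => ‖E i i‖)
    simpa using this
  have h2 : ∑ i, ‖E i i‖ ^ 2 ≤ ∑ i, ∑ j, ‖E i j‖ ^ 2 :=
    Finset.sum_le_sum fun i _ =>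
      Finset.single_le_sum (f := fun j => ‖E i j‖ ^ 2)
        (fun j _ => by positivity) (Finset.mem_univ i)
  have h3 : a ^ 2 ≤ (Real.sqrt n * F) ^ 2 := by
    have hFsq : F ^ 2 = ∑ i, ∑ j, ‖E i j‖ ^ 2 :=
      Real.sq_sqrt (Finset.sum_nonneg fun i _ => Finset.sum_nonneg fun j _ => by positivity)
    rw [mul_pow, Real.sq_sqrt (Nat.cast_nonneg n), hFsq]
    calc a ^ 2 ≤ n * ∑ i, ‖E i i‖ ^ 2 := h1
      _ ≤ n * ∑ i, ∑ j, ‖E i j‖ ^ 2 := by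
          exact mul_le_mul_of_nonneg_left h2 (Nat.cast_nonneg n)
  have := Real.sqrt_le_sqrt h3
  rw [Real.sqrt_sq hann, Real.sqrt_sq (mul_nonneg (Real.sqrt_nonneg _) hFnn)] at this
  exact h0.trans this

lemma key_lemma (n : ℕ) (hn : 1 ≤ n) (δ : ℝ) (hδ : 0 < δ)
    (T₁ T₂ : Matrix (Fin n) (Fin n) ℂ)
    (hT₁ : T₁.IsHermitian) (hT₂ : T₂.IsHermitian)
    (hT₁δ : (T₁ - δ • (1 : Matrix (Fin n) (Fin n) ℂ)).PosSemidef)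
    (hT₂δ : (T₂ - δ • (1 : Matrix (Fin n) (Fin n) ℂ)).PosSemidef)
    (htr₁ : T₁.trace.re ≤ 1) (htr₂ : T₂.trace.re ≤ 1) :
    gammaPlus T₁ ≤ gammaPlus T₂ +
      ((n : ℝ) / δ + (n : ℝ) ^ ((3 : ℝ) / 2)) * frobNorm (T₁ - T₂) := by
  set F := frobNorm (T₁ - T₂) with hFdef
  have hFnn : 0 ≤ F := Real.sqrt_nonneg _
  have hn' : (0:ℝ) < n := by exact_mod_cast Nat.pos_of_ne_zero (by omega)
  have hpsd1 : T₁.PosSemidef := by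
    have h := hT₁δ.add (posSemidef_real_smul hδ.le (Matrix.PosSemidef.one))
    simpa using h
  have hpsd2 : T₂.PosSemidef := by
    have h := hT₂δ.add (posSemidef_real_smul hδ.le (Matrix.PosSemidef.one))
    simpa using h
  have hγ2 : 0 ≤ gammaPlus T₂ := gammaPlus_nonneg _
  have h32 : (n:ℝ) ^ ((3:ℝ)/2) = n * Real.sqrt n := by
    rw [show (3:ℝ)/2 = 1 + 1/2 by norm_num, Real.rpow_add hn', Real.rpow_one,
      ← Real.sqrt_eq_rpow]
  rcases le_or_gt δ F with hcase | hcase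
  · have h1 : gammaPlus T₁ ≤ n * T₁.trace.re := gammaPlus_le_trace hpsd1
    have h2 : (n:ℝ) * T₁.trace.re ≤ n := by nlinarith
    have h3 : (n:ℝ) ≤ (n/δ) * F := by
      calc (n:ℝ) = n/δ * δ := by field_simp
        _ ≤ (n/δ) * F := by
            apply mul_le_mul_of_nonneg_left hcase
            positivity
    have h4 : 0 ≤ (n:ℝ) ^ ((3:ℝ)/2) * F := by positivity
    nlinarith
  · set s := F / δ with hs
    have hs0 : 0 ≤ s := by positivity
    have hs1 : s ≤ 1 := (div_le_one hδ).2 hcase.le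
    have hsδ : s * δ = F := div_mul_cancel₀ _ hδ.ne'
    set E := T₁ - T₂ with hE
    have hEH : E.IsHermitian := hT₁.sub hT₂
    have hB : (s • T₂ + E).PosSemidef := by
      have heq : s • T₂ + E = s • (T₂ - δ • (1 : Matrix (Fin n) (Fin n) ℂ))
          + (F • (1 : Matrix (Fin n) (Fin n) ℂ) + E) := by
        have h1 : F • (1 : Matrix (Fin n) (Fin n) ℂ)
            = s • (δ • (1 : Matrix (Fin n) (Fin n) ℂ)) := by
          rw [smul_smul, hsδ]
        rw [h1, smul_sub]
        abel
      rw [heq]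
      have := posSemidef_frob_one_add hEH
      rw [← hFdef] at this
      exact (posSemidef_real_smul hs0 hT₂δ).add this
    have hA : ((1 - s) • T₂).PosSemidef := posSemidef_real_smul (by linarith) hpsd2
    have hdecomp : T₁ = (1 - s) • T₂ + (s • T₂ + E) := by
      rw [hE]
      rw [sub_smul, one_smul]
      abel
    have step1 : gammaPlus T₁ ≤ gammaPlus ((1 - s) • T₂) + gammaPlus (s • T₂ + E) := by
      conv_lhs => rw [hdecomp]
      exact gammaPlus_add_le hA hB
    have step2 : gammaPlus ((1 - s) • T₂) ≤ (1 - s) * gammaPlus T₂ :=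
      gammaPlus_smul_le (by linarith) hpsd2
    have htrace : (s • T₂ + E).trace.re = s * T₂.trace.re + E.trace.re := by
      rw [Matrix.trace_add, Matrix.trace_smul, Complex.add_re]
      congr 1
      rw [Complex.real_smul, Complex.re_ofReal_mul]
    have step3 : gammaPlus (s • T₂ + E) ≤ n * (s * T₂.trace.re + E.trace.re) := by
      have := gammaPlus_le_trace hB
      rwa [htrace] at this
    have htrE : E.trace.re ≤ Real.sqrt n * F := by
      have := trace_re_le_sqrt E
      rwa [← hFdef] at this
    have hns : (n:ℝ) * s = (n/δ) * F := by
      rw [hs]; field_simp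
    have hfin1 : (n:ℝ) * (s * T₂.trace.re) ≤ n * s := by
      nlinarith [mul_le_mul_of_nonneg_left htr₂ (mul_nonneg hn'.le hs0)]
    have hfin2 : (n:ℝ) * E.trace.re ≤ n * (Real.sqrt n * F) :=
      mul_le_mul_of_nonneg_left htrE (by positivity)
    have hsγ : 0 ≤ s * gammaPlus T₂ := mul_nonneg hs0 hγ2
    calc gammaPlus T₁ ≤ (1 - s) * gammaPlus T₂ + n * (s * T₂.trace.re + E.trace.re) := by
          linarith
      _ ≤ gammaPlus T₂ + (n/δ) * F + n * Real.sqrt n * F := by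
          rw [mul_add]
          nlinarith
      _ = gammaPlus T₂ + ((n : ℝ) / δ + (n : ℝ) ^ ((3 : ℝ) / 2)) * F := by
          rw [h32]; ring

lemma frobNorm_sub_comm {n : ℕ} (A B : Matrix (Fin n) (Fin n) ℂ) :
    frobNorm (A - B) = frobNorm (B - A) := by
  unfold frobNorm
  congr 1
  refine Finset.sum_congr rfl fun i _ => Finset.sum_congr rfl fun j _ => ?_
  rw [Matrix.sub_apply, Matrix.sub_apply,
    show A i j - B i j = -(B i j - A i j) by ring, norm_neg]

theorem stmt14 (n : ℕ) (hn : 1 ≤ n) (δ : ℝ) (hδ : 0 < δ)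
    (T₁ T₂ : Matrix (Fin n) (Fin n) ℂ)
    (hT₁ : T₁.IsHermitian) (hT₂ : T₂.IsHermitian)
    (hT₁δ : (T₁ - δ • (1 : Matrix (Fin n) (Fin n) ℂ)).PosSemidef)
    (hT₂δ : (T₂ - δ • (1 : Matrix (Fin n) (Fin n) ℂ)).PosSemidef)
    (htr₁ : T₁.trace.re ≤ 1) (htr₂ : T₂.trace.re ≤ 1) :
    |gammaPlus T₁ - gammaPlus T₂| ≤
      ((n : ℝ) / δ + (n : ℝ) ^ ((3 : ℝ) / 2)) * frobNorm (T₁ - T₂) := by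
  rw [abs_sub_le_iff]
  constructor
  · have := key_lemma n hn δ hδ T₁ T₂ hT₁ hT₂ hT₁δ hT₂δ htr₁ htr₂
    linarith
  · have := key_lemma n hn δ hδ T₂ T₁ hT₂ hT₁ hT₂δ hT₁δ htr₂ htr₁
    rw [frobNorm_sub_comm T₂ T₁] at this
    linarith
end

section
/- Let n ≥ 1 and let A be an n×n complex positive semidefinite Hermitian matrix that is diagonally dominant, i.e., A_{ii} ≥ Σ_{j ≠ i} |A_{ij}| for every i. Then γ₊(A) = γ₀(A) = γ(A) = ‖A‖₁,₁. -/
open Matrix ComplexOrder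

lemma cabs_ofReal (r : ℝ) : ‖(r : ℂ)‖ = |r| := by
  rw [Complex.norm_real, Real.norm_eq_abs]

lemma norm11_le_sum {n m : ℕ} (g h : Fin m → Fin n → ℂ) :
    norm11 (∑ k, vecMulVec (g k) (star (h k))) ≤ ∑ k, l1n (g k) * l1n (h k) := by
  unfold norm11
  have key : ∀ i j : Fin n, ‖(∑ k, vecMulVec (g k) (star (h k))) i j‖
      ≤ ∑ k, ‖g k i‖ * ‖h k j‖ := by
    intro i j
    simp only [Matrix.sum_apply, vecMulVec_apply, Pi.star_apply]
    refine (norm_sum_le _ _).trans (le_of_eq (Finset.sum_congr rfl fun k _ => ?_))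
    simp [_root_.map_mul]
  calc ∑ i, ∑ j, ‖(∑ k, vecMulVec (g k) (star (h k))) i j‖
      ≤ ∑ i, ∑ j, ∑ k, ‖g k i‖ * ‖h k j‖ := by
        exact Finset.sum_le_sum fun i _ => Finset.sum_le_sum fun j _ => key i j
    _ = ∑ k, l1n (g k) * l1n (h k) := by
        refine Eq.trans (Finset.sum_congr rfl fun i _ => Finset.sum_comm) ?_
        rw [Finset.sum_comm]
        simp only [l1n, Finset.sum_mul_sum]

lemma exists_decomp_of_psd {n : ℕ} {B : Matrix (Fin n) (Fin n) ℂ} (hB : B.PosSemidef) :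
    ∃ (m : ℕ) (g : Fin m → Fin n → ℂ), B = ∑ k, vecMulVec (g k) (star (g k)) := by
  exact Matrix.posSemidef_iff_eq_sum_vecMulVec.mp hB

lemma norm11_sub_le {n : ℕ} (B C : Matrix (Fin n) (Fin n) ℂ) :
    norm11 (B - C) ≤ norm11 B + norm11 C := by
  unfold norm11
  rw [← Finset.sum_add_distrib]
  refine Finset.sum_le_sum fun i _ => ?_
  rw [← Finset.sum_add_distrib]
  refine Finset.sum_le_sum fun j _ => ?_
  simpa using norm_sub_le (B i j) (C i j)

noncomputable def ddA {n : ℕ} (A : Matrix (Fin n) (Fin n) ℂ) (i : Fin n) : ℝ :=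
  (A i i).re - ∑ j ∈ Finset.univ.erase i, ‖A i j‖

noncomputable def Gv {n : ℕ} (A : Matrix (Fin n) (Fin n) ℂ) (i j : Fin n) : Fin n → ℂ := fun l =>
  if i = j then (if l = i then (Real.sqrt (ddA A i) : ℂ) else 0)
  else if l = i then (Real.sqrt (‖A i j‖ / 2) : ℂ)
  else if l = j then (Real.sqrt (‖A i j‖ / 2) : ℂ) * (starRingEnd ℂ (A i j)) / (‖A i j‖ : ℂ)
  else 0

lemma Gv_diag {n : ℕ} (A : Matrix (Fin n) (Fin n) ℂ) (i l : Fin n) :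
    Gv A i i l = if l = i then (Real.sqrt (ddA A i) : ℂ) else 0 := by simp [Gv]

lemma Gv_fst {n : ℕ} (A : Matrix (Fin n) (Fin n) ℂ) {i j : Fin n} (h : i ≠ j) :
    Gv A i j i = (Real.sqrt (‖A i j‖ / 2) : ℂ) := by simp [Gv, h]

lemma Gv_snd {n : ℕ} (A : Matrix (Fin n) (Fin n) ℂ) {i j : Fin n} (h : i ≠ j) :
    Gv A i j j = (Real.sqrt (‖A i j‖ / 2) : ℂ) * (starRingEnd ℂ (A i j))
      / (‖A i j‖ : ℂ) := by
  simp [Gv, h, h.symm]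

lemma Gv_other {n : ℕ} (A : Matrix (Fin n) (Fin n) ℂ) {i j l : Fin n} (h : i ≠ j)
    (h1 : l ≠ i) (h2 : l ≠ j) : Gv A i j l = 0 := by simp [Gv, h, h1, h2]

lemma star_coe (x : ℝ) : star ((x : ℝ) : ℂ) = (x : ℂ) := by
  rw [RCLike.star_def, Complex.conj_ofReal]

lemma sqrt_mul_self' {x : ℝ} (hx : 0 ≤ x) :
    ((Real.sqrt x : ℝ) : ℂ) * ((Real.sqrt x : ℝ) : ℂ) = (x : ℂ) := by
  rw [← Complex.ofReal_mul, Real.mul_self_sqrt hx]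

lemma decomp {n : ℕ} (A : Matrix (Fin n) (Fin n) ℂ) (hH : A.IsHermitian)
    (hdd : ∀ i, ∑ j ∈ Finset.univ.erase i, ‖A i j‖ ≤ (A i i).re) :
    A = ∑ p : Fin n × Fin n, vecMulVec (Gv A p.1 p.2) (star (Gv A p.1 p.2)) := by
  have habsymm : ∀ i j : Fin n, ‖A i j‖ = ‖A j i‖ := by
    intro i j
    rw [← hH.apply i j, RCLike.star_def, Complex.norm_conj]
  ext r s
  rw [Matrix.sum_apply]
  simp only [vecMulVec_apply, Pi.star_apply]
  rw [Fintype.sum_prod_type]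
  by_cases hrs : r = s
  · subst hrs
    have hd : 0 ≤ ddA A r := sub_nonneg.2 (hdd r)
    -- inner sum for i = r
    have inner_r : ∑ j, Gv A r j r * star (Gv A r j r)
        = ∑ j ∈ Finset.univ.erase r, ((‖A r j‖ / 2 : ℝ) : ℂ) + ((ddA A r : ℝ) : ℂ) := by
      rw [← Finset.sum_erase_add _ _ (Finset.mem_univ r)]
      congr 1
      · refine Finset.sum_congr rfl fun j hj => ?_
        have hj' : r ≠ j := (Finset.ne_of_mem_erase hj).symm
        rw [Gv_fst A hj', star_coe, sqrt_mul_self' (by positivity)]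
      · rw [Gv_diag, if_pos rfl, star_coe, sqrt_mul_self' hd]
    have inner_ne : ∀ i, i ≠ r → ∑ j, Gv A i j r * star (Gv A i j r)
        = ((‖A i r‖ / 2 : ℝ) : ℂ) := by
      intro i hi
      rw [Finset.sum_eq_single r]
      · by_cases ha : A i r = 0
        · rw [Gv_snd A hi, ha]
          simp
        · rw [Gv_snd A hi]
          rw [RCLike.star_def, map_div₀, _root_.map_mul, Complex.conj_ofReal, Complex.conj_conj,
            Complex.conj_ofReal]
          have hA0 : ((‖A i r‖ : ℝ) : ℂ) ≠ 0 := by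
            simpa [Complex.ofReal_ne_zero] using (norm_ne_zero_iff.mpr ha)
          have hc := sqrt_mul_self' (x := ‖A i r‖ / 2) (by positivity)
          have hmc : A i r * (starRingEnd ℂ) (A i r)
              = ((‖A i r‖ : ℝ) : ℂ) * ((‖A i r‖ : ℝ) : ℂ) := by
            rw [Complex.mul_conj, ← Complex.sq_norm]
            push_cast
            ring
          rw [div_mul_div_comm, div_eq_iff (mul_ne_zero hA0 hA0)]
          linear_combination ((starRingEnd ℂ) (A i r) * A i r) * hc
            + ((‖A i r‖ / 2 : ℝ) : ℂ) * hmc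
      · intro j _ hj
        by_cases hij : i = j
        · subst hij
          rw [Gv_diag, if_neg (Ne.symm hi)]
          simp
        · rw [Gv_other A hij (Ne.symm hi) (Ne.symm hj)]
          simp
      · simp
    rw [← Finset.sum_erase_add _ _ (Finset.mem_univ r), inner_r,
      Finset.sum_congr rfl (fun i hi => inner_ne i (Finset.ne_of_mem_erase hi))]
    have hdiag : A r r = (((A r r).re : ℝ) : ℂ) := (hH.coe_re_apply_self r).symm
    rw [hdiag, ← Complex.ofReal_sum, ← Complex.ofReal_sum, ← Complex.ofReal_add,
      ← Complex.ofReal_add, Complex.ofReal_inj]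
    have h1 : ∑ x ∈ Finset.univ.erase r, ‖A x r‖ / 2
        = ∑ x ∈ Finset.univ.erase r, ‖A r x‖ / 2 :=
      Finset.sum_congr rfl fun x _ => by rw [habsymm]
    have h2 : ∑ x ∈ Finset.univ.erase r, ‖A r x‖ / 2
        + ∑ x ∈ Finset.univ.erase r, ‖A r x‖ / 2
        = ∑ x ∈ Finset.univ.erase r, ‖A r x‖ := by
      rw [← Finset.sum_add_distrib]
      exact Finset.sum_congr rfl fun _ _ => add_halves _
    unfold ddA
    linarith
  · -- r ≠ s
    have hzero : ∀ i ∈ Finset.univ, i ∉ ({r, s} : Finset (Fin n)) →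
        ∑ j, Gv A i j r * star (Gv A i j s) = 0 := by
      intro i _ hi
      simp only [Finset.mem_insert, Finset.mem_singleton, not_or] at hi
      obtain ⟨hir, his⟩ := hi
      refine Finset.sum_eq_zero fun j _ => ?_
      by_cases hij : i = j
      · subst hij
        rw [Gv_diag, if_neg (Ne.symm hir)]
        simp
      · by_cases hjr : j = r
        · subst hjr
          rw [Gv_other A hij (Ne.symm his) (Ne.symm hrs)]
          simp
        · rw [Gv_other A hij (Ne.symm hir) (Ne.symm hjr)]
          simp
    rw [← Finset.sum_subset (Finset.subset_univ ({r, s} : Finset (Fin n))) hzero,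
      Finset.sum_pair hrs]
    have hr1 : ∑ j, Gv A r j r * star (Gv A r j s) = Gv A r s r * star (Gv A r s s) := by
      rw [Finset.sum_eq_single s]
      · intro j _ hjs
        by_cases hjr : r = j
        · subst hjr
          have h0 : Gv A r r s = 0 := by rw [Gv_diag, if_neg (Ne.symm hrs)]
          rw [h0]
          simp
        · rw [Gv_other A hjr (Ne.symm hrs) (Ne.symm hjs)]
          simp
      · simp
    have hs1 : ∑ j, Gv A s j r * star (Gv A s j s) = Gv A s r r * star (Gv A s r s) := by
      rw [Finset.sum_eq_single r]
      · intro j _ hjr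
        by_cases hsj : s = j
        · subst hsj
          rw [Gv_diag, if_neg hrs]
          simp
        · rw [Gv_other A hsj hrs (Ne.symm hjr)]
          simp
      · simp
    have hb : A s r = (starRingEnd ℂ) (A r s) := by
      rw [← hH.apply s r, RCLike.star_def]
    rw [hr1, hs1, Gv_fst A hrs, Gv_snd A hrs, Gv_snd A (Ne.symm hrs), Gv_fst A (Ne.symm hrs), hb,
      Complex.norm_conj, Complex.conj_conj]
    by_cases ha : A r s = 0
    · simp [ha]
    · have hA0 : ((‖A r s‖ : ℝ) : ℂ) ≠ 0 := by
        simpa [Complex.ofReal_ne_zero] using (norm_ne_zero_iff.mpr ha)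
      have hc : ((Real.sqrt (‖A r s‖ / 2) : ℝ) : ℂ)
          * ((Real.sqrt (‖A r s‖ / 2) : ℝ) : ℂ)
          = ((‖A r s‖ : ℝ) : ℂ) / 2 := by
        rw [sqrt_mul_self' (by positivity)]
        push_cast
        ring
      simp only [RCLike.star_def, map_div₀, _root_.map_mul, Complex.conj_ofReal,
        Complex.conj_conj]
      set c : ℂ := ((Real.sqrt (‖A r s‖ / 2) : ℝ) : ℂ) with hcdef
      have hexp : c * (c * A r s / ((‖A r s‖ : ℝ) : ℂ))
          + c * A r s / ((‖A r s‖ : ℝ) : ℂ) * c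
          = (c * c) * A r s * 2 / ((‖A r s‖ : ℝ) : ℂ) := by ring
      rw [hexp, hc]
      field_simp

lemma l1n_sum {n : ℕ} (A : Matrix (Fin n) (Fin n) ℂ) (hH : A.IsHermitian)
    (hdd : ∀ i, ∑ j ∈ Finset.univ.erase i, ‖A i j‖ ≤ (A i i).re) :
    ∑ p : Fin n × Fin n, (l1n (Gv A p.1 p.2)) ^ 2 = norm11 A := by
  rw [Fintype.sum_prod_type]
  unfold norm11
  refine Finset.sum_congr rfl fun i _ => ?_
  rw [← Finset.sum_erase_add _ _ (Finset.mem_univ i),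
    ← Finset.sum_erase_add _ (fun j => ‖A i j‖) (Finset.mem_univ i)]
  have hd : 0 ≤ ddA A i := sub_nonneg.2 (hdd i)
  have hdiagl1 : l1n (Gv A i i) = Real.sqrt (ddA A i) := by
    unfold l1n
    rw [Finset.sum_eq_single i]
    · rw [Gv_diag, if_pos rfl, cabs_ofReal, abs_of_nonneg (Real.sqrt_nonneg _)]
    · intro l _ hl
      rw [Gv_diag, if_neg hl]
      simp
    · simp
  have hoff : ∀ j ∈ Finset.univ.erase i, (l1n (Gv A i j)) ^ 2 = 2 * ‖A i j‖ := by
    intro j hj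
    have hij : i ≠ j := (Finset.ne_of_mem_erase hj).symm
    by_cases ha : A i j = 0
    · have hz : l1n (Gv A i j) = 0 := by
        unfold l1n
        refine Finset.sum_eq_zero fun l _ => ?_
        by_cases hli : l = i
        · subst hli
          rw [Gv_fst A hij, ha]
          simp
        · by_cases hlj : l = j
          · subst hlj
            rw [Gv_snd A hij, ha]
            simp
          · rw [Gv_other A hij hli hlj]
            simp
      rw [hz, ha]
      simp
    · have h1 : ‖Gv A i j i‖ = Real.sqrt (‖A i j‖ / 2) := by
        rw [Gv_fst A hij, cabs_ofReal, abs_of_nonneg (Real.sqrt_nonneg _)]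
      have h2 : ‖Gv A i j j‖ = Real.sqrt (‖A i j‖ / 2) := by
        rw [Gv_snd A hij, norm_div, norm_mul, cabs_ofReal, Complex.norm_conj,
          cabs_ofReal, abs_of_nonneg (Real.sqrt_nonneg _),
          abs_of_nonneg (norm_nonneg _), mul_div_assoc,
          div_self (norm_ne_zero_iff.mpr ha), mul_one]
      have hzero : ∀ l ∈ Finset.univ, l ∉ ({i, j} : Finset (Fin n)) →
          ‖Gv A i j l‖ = 0 := by
        intro l _ hl
        simp only [Finset.mem_insert, Finset.mem_singleton, not_or] at hl
        rw [Gv_other A hij hl.1 hl.2]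
        simp
      have hl1 : l1n (Gv A i j) = 2 * Real.sqrt (‖A i j‖ / 2) := by
        unfold l1n
        rw [← Finset.sum_subset (Finset.subset_univ ({i, j} : Finset (Fin n))) hzero,
          Finset.sum_pair hij, h1, h2]
        ring
      rw [hl1, mul_pow, Real.sq_sqrt (by positivity)]
      ring
  rw [Finset.sum_congr rfl hoff, hdiagl1, Real.sq_sqrt hd]
  have hii : ‖A i i‖ = (A i i).re := by
    have h0 : 0 ≤ (A i i).re :=
      le_trans (Finset.sum_nonneg fun _ _ => norm_nonneg _) (hdd i)
    have himag : (((A i i).re : ℝ) : ℂ) = A i i :=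
      Complex.conj_eq_iff_re.mp (by rw [← RCLike.star_def]; exact hH.apply i i)
    calc ‖A i i‖ = ‖((((A i i).re : ℝ)) : ℂ)‖ := by rw [himag]
      _ = |(A i i).re| := cabs_ofReal _
      _ = (A i i).re := abs_of_nonneg h0
  rw [hii]
  have h2m : ∑ j ∈ Finset.univ.erase i, 2 * ‖A i j‖
      = ∑ j ∈ Finset.univ.erase i, ‖A i j‖
        + ∑ j ∈ Finset.univ.erase i, ‖A i j‖ := by
    rw [← Finset.sum_add_distrib]
    exact Finset.sum_congr rfl fun _ _ => two_mul _
  unfold ddA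
  linarith

lemma gammaPlus_lb {n : ℕ} (B : Matrix (Fin n) (Fin n) ℂ) :
    ∀ r ∈ {r : ℝ | ∃ (m : ℕ) (g : Fin m → Fin n → ℂ),
      B = ∑ k, vecMulVec (g k) (star (g k)) ∧ r = ∑ k, (l1n (g k)) ^ 2}, norm11 B ≤ r := by
  rintro r ⟨m, g, hg, rfl⟩
  calc norm11 B = norm11 (∑ k, vecMulVec (g k) (star (g k))) := by rw [← hg]
    _ ≤ ∑ k, l1n (g k) * l1n (g k) := norm11_le_sum g g
    _ = ∑ k, (l1n (g k)) ^ 2 := Finset.sum_congr rfl fun k _ => (pow_two _).symm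

lemma norm11_le_gammaPlus {n : ℕ} {B : Matrix (Fin n) (Fin n) ℂ} (hB : B.PosSemidef) :
    norm11 B ≤ gammaPlus B := by
  obtain ⟨m, g, hg⟩ := exists_decomp_of_psd hB
  exact le_csInf ⟨_, ⟨m, g, hg, rfl⟩⟩ (gammaPlus_lb B)

theorem stmt16 (n : ℕ) (hn : 1 ≤ n) (A : Matrix (Fin n) (Fin n) ℂ) (hA : A.PosSemidef)
    (hdd : ∀ i, ∑ j ∈ Finset.univ.erase i, ‖A i j‖ ≤ (A i i).re) :
    gammaPlus A = norm11 A ∧ gammaZero A = norm11 A ∧ gammaCross A = norm11 A := by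
  have hH := hA.1
  have hdecomp := decomp A hH hdd
  have hsum := l1n_sum A hH hdd
  set e := (finProdFinEquiv : Fin n × Fin n ≃ Fin (n * n)) with he
  set g : Fin (n * n) → Fin n → ℂ := fun k => Gv A (e.symm k).1 (e.symm k).2 with hgdef
  have hdecomp' : A = ∑ k, vecMulVec (g k) (star (g k)) := by
    rw [hdecomp]
    refine Fintype.sum_equiv e (fun p => vecMulVec (Gv A p.1 p.2) (star (Gv A p.1 p.2)))
      (fun k => vecMulVec (g k) (star (g k))) fun p => ?_
    simp [hgdef]
  have hsum' : ∑ k, (l1n (g k)) ^ 2 = norm11 A := by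
    rw [← hsum]
    refine (Fintype.sum_equiv e (fun p => (l1n (Gv A p.1 p.2)) ^ 2)
      (fun k => (l1n (g k)) ^ 2) fun p => ?_).symm
    simp [hgdef]
  have hmemP : norm11 A ∈ {r : ℝ | ∃ (m : ℕ) (g : Fin m → Fin n → ℂ),
      A = ∑ k, vecMulVec (g k) (star (g k)) ∧ r = ∑ k, (l1n (g k)) ^ 2} :=
    ⟨n * n, g, hdecomp', hsum'.symm⟩
  have hP : gammaPlus A = norm11 A :=
    le_antisymm (csInf_le ⟨norm11 A, gammaPlus_lb A⟩ hmemP) (le_csInf ⟨_, hmemP⟩ (gammaPlus_lb A))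
  refine ⟨hP, ?_, ?_⟩
  · have hmem0 : norm11 A ∈ {r : ℝ | ∃ B C : Matrix (Fin n) (Fin n) ℂ,
        B.PosSemidef ∧ C.PosSemidef ∧ A = B - C ∧ r = gammaPlus B + gammaPlus C} :=
      ⟨A, 0, hA, Matrix.PosSemidef.zero, (sub_zero A).symm, by rw [hP, gammaPlus_zero, add_zero]⟩
    have hlb : ∀ r ∈ {r : ℝ | ∃ B C : Matrix (Fin n) (Fin n) ℂ,
        B.PosSemidef ∧ C.PosSemidef ∧ A = B - C ∧ r = gammaPlus B + gammaPlus C},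
        norm11 A ≤ r := by
      rintro r ⟨B, C, hB, hC, hBC, rfl⟩
      calc norm11 A = norm11 (B - C) := by rw [hBC]
        _ ≤ norm11 B + norm11 C := norm11_sub_le B C
        _ ≤ gammaPlus B + gammaPlus C :=
            add_le_add (norm11_le_gammaPlus hB) (norm11_le_gammaPlus hC)
    exact le_antisymm (csInf_le ⟨_, hlb⟩ hmem0) (le_csInf ⟨_, hmem0⟩ hlb)
  · have hmemC : norm11 A ∈ {r : ℝ | ∃ (m : ℕ) (g h : Fin m → Fin n → ℂ),
        A = ∑ k, vecMulVec (g k) (star (h k)) ∧ r = ∑ k, l1n (g k) * l1n (h k)} :=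
      ⟨n * n, g, g, hdecomp', by
        rw [← hsum']
        exact Finset.sum_congr rfl fun k _ => pow_two (l1n (g k))⟩
    have hlbC : ∀ r ∈ {r : ℝ | ∃ (m : ℕ) (g h : Fin m → Fin n → ℂ),
        A = ∑ k, vecMulVec (g k) (star (h k)) ∧ r = ∑ k, l1n (g k) * l1n (h k)},
        norm11 A ≤ r := by
      rintro r ⟨m, g', h', hg', rfl⟩
      rw [hg']
      exact norm11_le_sum g' h'
    exact le_antisymm (csInf_le ⟨_, hlbC⟩ hmemC) (le_csInf ⟨_, hmemC⟩ hlbC)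
end
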